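/- Let V1, V2 be K×K real invertible matrices such that ‖V2‖_F = √K, ‖V1 − V2‖_F ≤ √K·ε, λ_min(V2 V2^T) > K(2+ε)ε, where λ_min denotes the smallest eigenvalue. Then ‖(V1 V1^T)^{-1} − (V2 V2^T)^{-1}‖_F ≤ K²·(λ_min(V2 V2^T) − K(2+ε)ε)^{-1}·(λ_min(V2 V2^T))^{-1}·(2+ε)·ε. -/

import Mathlib

open Matrix

attribute [local instance] Matrix.frobeniusNormedAddCommGroup Matrix.frobeniusNormedRing

private lemma fro_sq {K : ℕ} (A : Matrix (Fin K) (Fin K) ℝ) :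
    ‖A‖ ^ 2 = ∑ i, ∑ j, (A i j) ^ 2 := by
  have h0 : (0:ℝ) ≤ ∑ i, ∑ j, ‖A i j‖ ^ (2:ℝ) := by positivity
  rw [Matrix.frobenius_norm_def, ← Real.rpow_natCast _ 2, ← Real.rpow_mul h0]
  norm_num

private lemma mulVec_sq_le {K : ℕ} (M : Matrix (Fin K) (Fin K) ℝ) (v : Fin K → ℝ) :
    ∑ i, ((M *ᵥ v) i) ^ 2 ≤ ‖M‖ ^ 2 * ∑ j, (v j) ^ 2 := by
  rw [fro_sq, Finset.sum_mul]
  apply Finset.sum_le_sum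
  intro i _
  calc ((M *ᵥ v) i) ^ 2 = (∑ j, M i j * v j) ^ 2 := rfl
    _ ≤ (∑ j, (M i j) ^ 2) * ∑ j, (v j) ^ 2 :=
        Finset.sum_mul_sq_le_sq_mul_sq _ _ _

private lemma abs_dot_mulVec_le {K : ℕ} (M : Matrix (Fin K) (Fin K) ℝ) (u v : Fin K → ℝ)
    (hu : ∑ i, (u i) ^ 2 = 1) (hv : ∑ i, (v i) ^ 2 = 1) :
    |u ⬝ᵥ (M *ᵥ v)| ≤ ‖M‖ := by
  have h1 : u ⬝ᵥ (M *ᵥ v) ≤ ‖M‖ := by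
    calc u ⬝ᵥ (M *ᵥ v) = ∑ i, u i * (M *ᵥ v) i := rfl
      _ ≤ Real.sqrt (∑ i, (u i) ^ 2) * Real.sqrt (∑ i, ((M *ᵥ v) i) ^ 2) :=
          Real.sum_mul_le_sqrt_mul_sqrt _ _ _
      _ ≤ 1 * Real.sqrt (‖M‖ ^ 2 * 1) := by
          apply mul_le_mul
          · rw [hu]; simp
          · exact Real.sqrt_le_sqrt (by rw [← hv]; exact mulVec_sq_le M v)
          · positivity
          · norm_num
      _ = ‖M‖ := by rw [mul_one, one_mul, Real.sqrt_sq (norm_nonneg M)]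
  have h2 : -(u ⬝ᵥ (M *ᵥ v)) ≤ ‖M‖ := by
    have : (-u) ⬝ᵥ (M *ᵥ v) ≤ ‖M‖ := by
      calc (-u) ⬝ᵥ (M *ᵥ v) = ∑ i, (-u) i * (M *ᵥ v) i := rfl
        _ ≤ Real.sqrt (∑ i, ((-u) i) ^ 2) * Real.sqrt (∑ i, ((M *ᵥ v) i) ^ 2) :=
            Real.sum_mul_le_sqrt_mul_sqrt _ _ _
        _ ≤ 1 * Real.sqrt (‖M‖ ^ 2 * 1) := by
            apply mul_le_mul
            · simp only [Pi.neg_apply, neg_sq]; rw [hu]; simp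
            · exact Real.sqrt_le_sqrt (by rw [← hv]; exact mulVec_sq_le M v)
            · positivity
            · norm_num
        _ = ‖M‖ := by rw [mul_one, one_mul, Real.sqrt_sq (norm_nonneg M)]
    simpa [neg_dotProduct] using this
  exact abs_le.mpr ⟨by linarith, h1⟩

private lemma spectral_real {K : ℕ} {B : Matrix (Fin K) (Fin K) ℝ} (hB : B.IsHermitian) :
    B = (hB.eigenvectorUnitary : Matrix (Fin K) (Fin K) ℝ) * diagonal hB.eigenvalues
      * star (hB.eigenvectorUnitary : Matrix (Fin K) (Fin K) ℝ) := by
  have := hB.spectral_theorem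
  rwa [RCLike.ofReal_real_eq_id, Function.id_comp] at this

private lemma shift_posSemidef {K : ℕ} {B : Matrix (Fin K) (Fin K) ℝ} (hB : B.IsHermitian)
    {c : ℝ} (hc : ∀ i, c ≤ hB.eigenvalues i) : (B - c • 1).PosSemidef := by
  set U : Matrix (Fin K) (Fin K) ℝ := (hB.eigenvectorUnitary : Matrix (Fin K) (Fin K) ℝ) with hU
  have hUU : U * star U = 1 := Matrix.mem_unitaryGroup_iff.mp (hB.eigenvectorUnitary).2
  have key : B - c • 1 = U * diagonal (fun i => hB.eigenvalues i - c) * star U := by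
    have h1 : (diagonal (fun i => hB.eigenvalues i - c) : Matrix (Fin K) (Fin K) ℝ)
        = diagonal hB.eigenvalues - c • 1 := by
      rw [Matrix.smul_one_eq_diagonal, ← Matrix.diagonal_sub]
    rw [h1, Matrix.mul_sub, Matrix.sub_mul, ← spectral_real hB]
    congr 1
    rw [Matrix.mul_smul, Matrix.smul_mul, Matrix.mul_one, hUU]
  rw [key, Matrix.star_eq_conjTranspose U]
  exact (Matrix.PosSemidef.diagonal (fun i => by simpa using hc i)).mul_mul_conjTranspose_same U

private lemma rayleigh_lower {K : ℕ} {B : Matrix (Fin K) (Fin K) ℝ} (hB : B.IsHermitian)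
    {c : ℝ} (hc : ∀ i, c ≤ hB.eigenvalues i) (x : Fin K → ℝ) :
    c * ∑ i, (x i) ^ 2 ≤ x ⬝ᵥ (B *ᵥ x) := by
  have h := (shift_posSemidef hB hc).dotProduct_mulVec_nonneg x
  simp only [star_trivial] at h
  rw [Matrix.sub_mulVec, dotProduct_sub, Matrix.smul_mulVec,
    Matrix.one_mulVec, dotProduct_smul] at h
  have hx : x ⬝ᵥ x = ∑ i, (x i) ^ 2 := by
    simp [dotProduct, sq]
  rw [hx] at h
  simp only [smul_eq_mul] at h
  linarith

private lemma weyl_min {K : ℕ} {A B : Matrix (Fin K) (Fin K) ℝ}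
    (hA : A.IsHermitian) (hB : B.IsHermitian) (j : Fin K) :
    (⨅ i, hB.eigenvalues i) - ‖A - B‖ ≤ hA.eigenvalues j := by
  set u : Fin K → ℝ := ⇑(hA.eigenvectorBasis j) with hu
  have hu1 : ∑ i, (u i) ^ 2 = 1 := by
    have h := hA.eigenvectorBasis.orthonormal.1 j
    rw [EuclideanSpace.norm_eq] at h
    have h2 := congrArg (· ^ 2) h
    simp only [one_pow] at h2
    rw [Real.sq_sqrt (by positivity)] at h2
    simpa [Real.norm_eq_abs, sq_abs] using h2
  have heig : A *ᵥ u = hA.eigenvalues j • u := hA.mulVec_eigenvectorBasis j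
  have hudot : u ⬝ᵥ u = 1 := by
    rw [← hu1]; simp [dotProduct, sq]
  have hstep : hA.eigenvalues j = u ⬝ᵥ (A *ᵥ u) := by
    rw [heig, dotProduct_smul, hudot, smul_eq_mul, mul_one]
  have hsplit : u ⬝ᵥ ((A - B) *ᵥ u) = u ⬝ᵥ (A *ᵥ u) - u ⬝ᵥ (B *ᵥ u) := by
    rw [Matrix.sub_mulVec, dotProduct_sub]
  have hlow : (⨅ i, hB.eigenvalues i) ≤ u ⬝ᵥ (B *ᵥ u) := by
    have := rayleigh_lower hB (fun i => ciInf_le (Finite.bddBelow_range _) i) u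
    rw [hu1, mul_one] at this
    exact this
  have habs := abs_le.mp (abs_dot_mulVec_le (A - B) u u hu1 hu1)
  linarith [habs.1, habs.2]

private lemma inv_norm_le {K : ℕ} {B : Matrix (Fin K) (Fin K) ℝ} (hB : B.IsHermitian)
    {c : ℝ} (hc : 0 < c) (hce : ∀ i, c ≤ hB.eigenvalues i) :
    ‖B⁻¹‖ ≤ Real.sqrt K / c := by
  set U : Matrix (Fin K) (Fin K) ℝ := (hB.eigenvectorUnitary : Matrix (Fin K) (Fin K) ℝ) with hUdef
  have hUU : U * star U = 1 := Matrix.mem_unitaryGroup_iff.mp (hB.eigenvectorUnitary).2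
  have hsUU : star U * U = 1 := Matrix.mem_unitaryGroup_iff'.mp (hB.eigenvectorUnitary).2
  set lam : Fin K → ℝ := hB.eigenvalues with hlam
  have hlpos : ∀ i, 0 < lam i := fun i => lt_of_lt_of_le hc (hce i)
  set N : Matrix (Fin K) (Fin K) ℝ := U * diagonal (fun i => (lam i)⁻¹) * star U with hNdef
  have hDD : diagonal lam * diagonal (fun i => (lam i)⁻¹) = (1 : Matrix (Fin K) (Fin K) ℝ) := by
    rw [Matrix.diagonal_mul_diagonal]
    have hfun : (fun i => lam i * (lam i)⁻¹) = fun _ : Fin K => (1:ℝ) :=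
      funext fun i => mul_inv_cancel₀ (hlpos i).ne'
    rw [hfun, Matrix.diagonal_one]
  have hBN : B * N = 1 := by
    calc B * N = (U * diagonal lam * star U) * (U * diagonal (fun i => (lam i)⁻¹) * star U) := by
          rw [← spectral_real hB]
      _ = U * (diagonal lam * ((star U * U) * diagonal (fun i => (lam i)⁻¹))) * star U := by
          simp only [Matrix.mul_assoc]
      _ = 1 := by rw [hsUU, Matrix.one_mul, hDD, Matrix.mul_one, hUU]
  have hinv : B⁻¹ = N := Matrix.inv_eq_right_inv hBN
  have hNsym : Nᵀ = N := by
    have h1 : star N = N := by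
      rw [hNdef]
      simp only [StarMul.star_mul, star_star]
      rw [Matrix.star_eq_conjTranspose (diagonal fun i => (lam i)⁻¹),
        Matrix.diagonal_conjTranspose]
      simp [Matrix.mul_assoc]
    calc Nᵀ = Nᴴ := by ext i j; simp [Matrix.conjTranspose_apply]
      _ = star N := (Matrix.star_eq_conjTranspose N).symm
      _ = N := h1
  have hNN : N * N = U * (diagonal (fun i => (lam i)⁻¹) * diagonal (fun i => (lam i)⁻¹)) * star U := by
    calc N * N = U * (diagonal (fun i => (lam i)⁻¹) * ((star U * U) * diagonal (fun i => (lam i)⁻¹))) * star U := by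
          rw [hNdef]; simp only [Matrix.mul_assoc]
      _ = _ := by rw [hsUU, Matrix.one_mul]
  have htrace : ∑ i, ∑ j, (N i j) ^ 2 = ∑ i, ((lam i)⁻¹) ^ 2 := by
    have h2 : ∑ i, ∑ j, (N i j) ^ 2 = Matrix.trace (Nᵀ * N) := by
      rw [Matrix.trace]
      simp only [Matrix.diag, Matrix.mul_apply, Matrix.transpose_apply]
      rw [Finset.sum_comm]
      simp [sq]
    rw [h2, hNsym, hNN, Matrix.trace_mul_comm, ← Matrix.mul_assoc, hsUU, Matrix.one_mul,
      Matrix.diagonal_mul_diagonal, Matrix.trace_diagonal]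
    simp [sq]
  have hbound : ‖N‖ ^ 2 ≤ (K : ℝ) / c ^ 2 := by
    rw [fro_sq, htrace]
    have : ∀ i : Fin K, ((lam i)⁻¹) ^ 2 ≤ (c⁻¹) ^ 2 := by
      intro i
      have h3 : (lam i)⁻¹ ≤ c⁻¹ := inv_anti₀ hc (hce i)
      have h4 : 0 ≤ (lam i)⁻¹ := (inv_pos.mpr (hlpos i)).le
      nlinarith
    calc ∑ i, ((lam i)⁻¹) ^ 2 ≤ ∑ _i : Fin K, (c⁻¹) ^ 2 := Finset.sum_le_sum fun i _ => this i
      _ = (K : ℝ) * (c⁻¹) ^ 2 := by simp [mul_comm]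
      _ = (K : ℝ) / c ^ 2 := by field_simp
  have hfin : ‖N‖ ≤ Real.sqrt ((K : ℝ) / c ^ 2) := by
    have := Real.sqrt_le_sqrt hbound
    rwa [Real.sqrt_sq (norm_nonneg N)] at this
  rw [hinv]
  calc ‖N‖ ≤ Real.sqrt ((K : ℝ) / c ^ 2) := hfin
    _ = Real.sqrt K / c := by
        rw [Real.sqrt_div (by positivity), Real.sqrt_sq hc.le]

/-- If `‖V₂‖_F = √K`, `‖V₁ − V₂‖_F ≤ √K ε`, both invertible, and
`λ_min(V₂V₂ᵀ) > K(2+ε)ε`, then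
`‖(V₁V₁ᵀ)⁻¹ − (V₂V₂ᵀ)⁻¹‖_F ≤ K² (λ_min(V₂V₂ᵀ) − K(2+ε)ε)⁻¹ (λ_min(V₂V₂ᵀ))⁻¹ (2+ε) ε`. -/
theorem stmt11 {K : ℕ} (hK : 0 < K) (V1 V2 : Matrix (Fin K) (Fin K) ℝ)
    (hV1 : IsUnit V1.det) (hV2 : IsUnit V2.det)
    (ε : ℝ) (hε : 0 < ε)
    (h2 : ‖V2‖ = Real.sqrt K) (h12 : ‖V1 - V2‖ ≤ Real.sqrt K * ε)
    (hH : (V2 * V2ᵀ).IsHermitian)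
    (hgap : (K : ℝ) * (2 + ε) * ε < ⨅ i, hH.eigenvalues i) :
    ‖(V1 * V1ᵀ)⁻¹ - (V2 * V2ᵀ)⁻¹‖ ≤
      (K : ℝ) ^ 2 * ((⨅ i, hH.eigenvalues i) - K * (2 + ε) * ε)⁻¹
        * (⨅ i, hH.eigenvalues i)⁻¹ * (2 + ε) * ε := by
  have hNe : Nonempty (Fin K) := ⟨⟨0, hK⟩⟩
  have hKpos : (0:ℝ) < K := Nat.cast_pos.mpr hK
  set μ : ℝ := ⨅ i, hH.eigenvalues i with hμdef
  set d : ℝ := (K : ℝ) * (2 + ε) * ε with hddef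
  have h2ε : (0:ℝ) < 2 + ε := by linarith
  have hd0 : 0 < d := mul_pos (mul_pos hKpos h2ε) hε
  have hμi : ∀ i, μ ≤ hH.eigenvalues i := fun i => ciInf_le (Finite.bddBelow_range _) i
  have hμ0 : 0 < μ := lt_trans hd0 hgap
  have hμd : 0 < μ - d := by linarith
  have hconj : ∀ (M : Matrix (Fin K) (Fin K) ℝ), Mᴴ = Mᵀ := fun M => by
    ext i j; simp [Matrix.conjTranspose_apply]
  have hA : (V1 * V1ᵀ).IsHermitian := hconj V1 ▸ Matrix.isHermitian_mul_conjTranspose_self V1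
  have hsK : Real.sqrt K * Real.sqrt K = (K:ℝ) := Real.mul_self_sqrt (Nat.cast_nonneg K)
  have hsK0 : (0:ℝ) ≤ Real.sqrt K := Real.sqrt_nonneg _
  have hV1n : ‖V1‖ ≤ Real.sqrt K * (1 + ε) := by
    calc ‖V1‖ = ‖V2 + (V1 - V2)‖ := by rw [add_sub_cancel]
      _ ≤ ‖V2‖ + ‖V1 - V2‖ := norm_add_le _ _
      _ ≤ Real.sqrt K + Real.sqrt K * ε := by rw [h2]; linarith
      _ = Real.sqrt K * (1 + ε) := by ring
  have hdecomp : V1 * V1ᵀ - V2 * V2ᵀ = (V1 - V2) * V1ᵀ + V2 * (V1 - V2)ᵀ := by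
    rw [Matrix.transpose_sub]
    noncomm_ring
  have step1 : ‖V1 * V1ᵀ - V2 * V2ᵀ‖ ≤ d := by
    rw [hdecomp]
    have hn0 : (0:ℝ) ≤ ‖V1 - V2‖ := norm_nonneg _
    calc ‖(V1 - V2) * V1ᵀ + V2 * (V1 - V2)ᵀ‖
        ≤ ‖(V1 - V2) * V1ᵀ‖ + ‖V2 * (V1 - V2)ᵀ‖ := norm_add_le _ _
      _ ≤ ‖V1 - V2‖ * ‖V1ᵀ‖ + ‖V2‖ * ‖(V1 - V2)ᵀ‖ :=
          add_le_add (norm_mul_le _ _) (norm_mul_le _ _)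
      _ = ‖V1 - V2‖ * ‖V1‖ + Real.sqrt K * ‖V1 - V2‖ := by
          rw [Matrix.frobenius_norm_transpose, Matrix.frobenius_norm_transpose, h2]
      _ ≤ d := by
          rw [hddef]
          nlinarith [mul_le_mul h12 hV1n (norm_nonneg V1) (by positivity : (0:ℝ) ≤ Real.sqrt K * ε),
            mul_le_mul_of_nonneg_left h12 hsK0]
  have hwey : ∀ j, μ - d ≤ hA.eigenvalues j := fun j =>
    le_trans (by linarith [step1] : μ - d ≤ μ - ‖V1 * V1ᵀ - V2 * V2ᵀ‖) (weyl_min hA hH j)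
  have hAinv : ‖(V1 * V1ᵀ)⁻¹‖ ≤ Real.sqrt K / (μ - d) := inv_norm_le hA hμd hwey
  have hBinv : ‖(V2 * V2ᵀ)⁻¹‖ ≤ Real.sqrt K / μ := inv_norm_le hH hμ0 hμi
  have hdetA : IsUnit (V1 * V1ᵀ).det := by
    rw [Matrix.det_mul, Matrix.det_transpose]; exact hV1.mul hV1
  have hdetB : IsUnit (V2 * V2ᵀ).det := by
    rw [Matrix.det_mul, Matrix.det_transpose]; exact hV2.mul hV2
  have hid : (V1 * V1ᵀ)⁻¹ - (V2 * V2ᵀ)⁻¹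
      = (V1 * V1ᵀ)⁻¹ * ((V2 * V2ᵀ) - (V1 * V1ᵀ)) * (V2 * V2ᵀ)⁻¹ := by
    rw [Matrix.mul_sub, Matrix.sub_mul, Matrix.mul_assoc,
      Matrix.mul_nonsing_inv _ hdetB, Matrix.nonsing_inv_mul _ hdetA,
      Matrix.mul_one, Matrix.one_mul]
  have hBA : ‖(V2 * V2ᵀ) - (V1 * V1ᵀ)‖ ≤ d := by
    rw [norm_sub_rev]; exact step1
  calc ‖(V1 * V1ᵀ)⁻¹ - (V2 * V2ᵀ)⁻¹‖
      = ‖(V1 * V1ᵀ)⁻¹ * ((V2 * V2ᵀ) - (V1 * V1ᵀ)) * (V2 * V2ᵀ)⁻¹‖ := by rw [hid]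
    _ ≤ ‖(V1 * V1ᵀ)⁻¹ * ((V2 * V2ᵀ) - (V1 * V1ᵀ))‖ * ‖(V2 * V2ᵀ)⁻¹‖ := norm_mul_le _ _
    _ ≤ ‖(V1 * V1ᵀ)⁻¹‖ * ‖(V2 * V2ᵀ) - (V1 * V1ᵀ)‖ * ‖(V2 * V2ᵀ)⁻¹‖ :=
        mul_le_mul_of_nonneg_right (norm_mul_le _ _) (norm_nonneg _)
    _ ≤ (Real.sqrt K / (μ - d)) * d * (Real.sqrt K / μ) := by
        have h1 : (0:ℝ) ≤ Real.sqrt K / (μ - d) := by positivity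
        have h2' : (0:ℝ) ≤ Real.sqrt K / μ := by positivity
        apply mul_le_mul
        · apply mul_le_mul hAinv hBA (norm_nonneg _) h1
        · exact hBinv
        · exact norm_nonneg _
        · positivity
    _ = (K : ℝ) ^ 2 * (μ - d)⁻¹ * μ⁻¹ * (2 + ε) * ε := by
        rw [hddef]
        field_simp
        rw [Real.sq_sqrt (Nat.cast_nonneg _)]
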